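/- For every finite subset V' of V, listing its elements in increasing order v_1 < v_2 < ⋯ < v_r, one has z^{γ_{v_1}} * z^{γ_{v_2}} * ⋯ * z^{γ_{v_r}} = (∏_{(v,w): v,w ∈ V', v < w} ∏_{e ∈ E with γ e v ≠ 0 and γ e w ≠ 0} Polynomial.aeval u_e (P_{γ e v, γ e w})) * z^{k}, where k : E → ℤ is given by k e = Σ_{v ∈ V'} γ e v. -/

import Mathlib

set_option linter.unusedSectionVars false

open MvPolynomial

variable {K : Type*} [Field K] {E : Type*} [Fintype E] [DecidableEq E]

noncomputable def Wx (K : Type*) [Field K] {E : Type*} (e : E) :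
    Module.End K (MvPolynomial E K) :=
  LinearMap.mulLeft K (X e)

noncomputable def Wy (K : Type*) [Field K] {E : Type*} (e : E) :
    Module.End K (MvPolynomial E K) :=
  (pderiv e).toLinearMap

noncomputable def Wu (K : Type*) [Field K] {E : Type*} (e : E) :
    Module.End K (MvPolynomial E K) :=
  Wy K e * Wx K e

lemma pderiv_pderiv_comm (a b : E) (p : MvPolynomial E K) :
    pderiv a (pderiv b p) = pderiv b (pderiv a p) := by
  induction p using MvPolynomial.induction_on with
  | C c => simp
  | add p q hp hq => simp [hp, hq]
  | mul_X p i hp =>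
      by_cases hai : a = i
      · subst hai
        by_cases hbi : b = a
        · subst hbi; rfl
        · simp [pderiv_mul, pderiv_X_of_ne (Ne.symm hbi), hp]; ring
      · by_cases hbi : b = i
        · subst hbi
          simp [pderiv_mul, pderiv_X_of_ne (Ne.symm hai), hp]; ring
        · simp [pderiv_mul, pderiv_X_of_ne (Ne.symm hai), pderiv_X_of_ne (Ne.symm hbi), hp]

lemma commute_Wx_Wx (a b : E) : Commute (Wx K a) (Wx K b) := by
  show _ = _
  apply LinearMap.ext; intro p
  simp [Wx, Module.End.mul_apply, mul_left_comm]

lemma commute_Wy_Wy (a b : E) : Commute (Wy K a) (Wy K b) := by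
  show _ = _
  apply LinearMap.ext; intro p
  simpa [Wy, Module.End.mul_apply] using pderiv_pderiv_comm (K := K) a b p

lemma commute_Wy_Wx {a b : E} (h : a ≠ b) : Commute (Wy K a) (Wx K b) := by
  show _ = _
  apply LinearMap.ext; intro p
  simp [Wy, Wx, Module.End.mul_apply, pderiv_mul, pderiv_X_of_ne (Ne.symm h)]

/-- `z_e^{(p)}` -/
noncomputable def Wz (K : Type*) [Field K] {E : Type*} (e : E) (p : ℤ) :
    Module.End K (MvPolynomial E K) :=
  if 0 ≤ p then Wx K e ^ p.toNat else Wy K e ^ (-p).toNat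

lemma commute_Wz {a b : E} (h : a ≠ b) (p q : ℤ) :
    Commute (Wz K a p) (Wz K b q) := by
  unfold Wz
  split_ifs <;>
    exact Commute.pow_pow (by
      first
        | exact commute_Wx_Wx a b
        | exact commute_Wy_Wy a b
        | exact commute_Wy_Wx h
        | exact (commute_Wy_Wx h.symm).symm) _ _

/-- `z^k` for `k : E → ℤ` -/
noncomputable def Zpow (K : Type*) [Field K] {E : Type*} [Fintype E] [DecidableEq E]
    (k : E → ℤ) : Module.End K (MvPolynomial E K) :=
  Finset.univ.noncommProd (fun e => Wz K e (k e))
    (fun a _ b _ hab => commute_Wz hab _ _)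

lemma commute_aeval_aeval {A : Type*} [Ring A] [Algebra K A] {a b : A} (h : Commute a b)
    (p q : Polynomial K) : Commute (Polynomial.aeval a p) (Polynomial.aeval b q) := by
  rw [Polynomial.aeval_eq_sum_range, Polynomial.aeval_eq_sum_range]
  apply Commute.sum_left
  intro i _
  apply Commute.sum_right
  intro j _
  exact ((h.pow_pow i j).smul_left _).smul_right _

lemma commute_Wu (a b : E) : Commute (Wu K a) (Wu K b) := by
  rcases eq_or_ne a b with rfl | h
  · rfl
  · exact Commute.mul_left
      ((commute_Wy_Wy a b).mul_right (commute_Wy_Wx h))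
      (((commute_Wy_Wx h.symm).symm).mul_right (commute_Wx_Wx a b))

/-- The defining property of the incidence matrix of a multiquiver: every row has
at most one positive and at most one negative entry. -/
def CondM {V E : Type*} (γ : E → V → ℤ) : Prop :=
  ∀ e : E, (∀ v w : V, 0 < γ e v → 0 < γ e w → v = w) ∧
    (∀ v w : V, γ e v < 0 → γ e w < 0 → v = w)

/-- Multiplication by `X` on `K[X]` (denoted `ξ`). -/
noncomputable def Bx (K : Type*) [Field K] : Module.End K (Polynomial K) :=
  LinearMap.mulLeft K (Polynomial.X : Polynomial K)

/-- The derivative `d/dX` on `K[X]` (denoted `η`). -/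
noncomputable def By (K : Type*) [Field K] : Module.End K (Polynomial K) :=
  Polynomial.derivative

/-- `η·ξ`. -/
noncomputable def Bu (K : Type*) [Field K] : Module.End K (Polynomial K) :=
  By K * Bx K

/-- `ζ^{(p)} = ξ^p` if `p ≥ 0`, `η^{−p}` if `p < 0`. -/
noncomputable def Bz (K : Type*) [Field K] (p : ℤ) : Module.End K (Polynomial K) :=
  if 0 ≤ p then Bx K ^ p.toNat else By K ^ (-p).toNat

/-- The factor `∏_{e between v and w} P_{γ e v, γ e w}(u_e)` attached to an
ordered pair `(v, w)` of vertices. -/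
noncomputable def edgeFactor (K : Type*) [Field K] {V E : Type*} [Fintype E] [DecidableEq E]
    (γ : E → V → ℤ) (P : ℤ → ℤ → Polynomial K) (p : V × V) :
    Module.End K (MvPolynomial E K) :=
  (Finset.univ.filter fun e : E => γ e p.1 ≠ 0 ∧ γ e p.2 ≠ 0).noncommProd
    (fun e => Polynomial.aeval (Wu K e) (P (γ e p.1) (γ e p.2)))
    (fun a _ b _ _ => commute_aeval_aeval (commute_Wu a b) _ _)

lemma commute_edgeFactor (K : Type*) [Field K] {V E : Type*} [Fintype E] [DecidableEq E]
    (γ : E → V → ℤ) (P : ℤ → ℤ → Polynomial K) (p q : V × V) :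
    Commute (edgeFactor K γ P p) (edgeFactor K γ P q) := by
  unfold edgeFactor
  apply Finset.noncommProd_commute
  intro x _
  apply Commute.symm
  apply Finset.noncommProd_commute
  intro z _
  exact commute_aeval_aeval (commute_Wu x z) _ _

/-! ### Auxiliary development -/

/-- coefficient produced by `ζ^{(p)}` acting on `X^j` -/
def zcoef (p : ℤ) (j : ℕ) : ℕ := if 0 ≤ p then 1 else j.descFactorial (-p).toNat

/-- exponent produced by `ζ^{(p)}` acting on `X^j` -/
def zexp (p : ℤ) (j : ℕ) : ℕ := if 0 ≤ p then j + p.toNat else j - (-p).toNat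

lemma By_pow_X_pow (b j : ℕ) :
    (By K ^ b) ((Polynomial.X : Polynomial K) ^ j) =
      (j.descFactorial b : K) • Polynomial.X ^ (j - b) := by
  induction b with
  | zero => simp
  | succ b ih =>
      rw [pow_succ', Module.End.mul_apply, ih, map_smul]
      have h2 : (By K) ((Polynomial.X : Polynomial K) ^ (j - b)) =
          ((j - b : ℕ) : K) • Polynomial.X ^ (j - b - 1) := by
        rw [By]
        simp [Polynomial.derivative_X_pow, Polynomial.smul_eq_C_mul]
      rw [h2, smul_smul, Nat.sub_sub, Nat.descFactorial_succ]
      push_cast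
      ring_nf

lemma Bx_pow_X_pow (a j : ℕ) :
    (Bx K ^ a) ((Polynomial.X : Polynomial K) ^ j) = Polynomial.X ^ (j + a) := by
  rw [Bx, LinearMap.pow_mulLeft, LinearMap.mulLeft_apply, ← pow_add, add_comm]

lemma Bz_X_pow (p : ℤ) (j : ℕ) :
    Bz K p ((Polynomial.X : Polynomial K) ^ j) =
      (zcoef p j : K) • Polynomial.X ^ (zexp p j) := by
  unfold Bz zcoef zexp
  split_ifs with h
  · rw [Bx_pow_X_pow]; simp
  · exact By_pow_X_pow _ _

lemma Bu_X_pow (j : ℕ) :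
    Bu K ((Polynomial.X : Polynomial K) ^ j) = ((j + 1 : ℕ) : K) • Polynomial.X ^ j := by
  rw [Bu, Module.End.mul_apply, Bx, LinearMap.mulLeft_apply, ← pow_succ', By]
  simp [Polynomial.derivative_X_pow, Polynomial.smul_eq_C_mul]

lemma aeval_apply_smul {M : Type*} [AddCommMonoid M] [Module K M]
    (f : Module.End K M) (x : M) (a : K) (h : f x = a • x) (Q : Polynomial K) :
    Polynomial.aeval f Q x = Q.eval a • x := by
  have hpow : ∀ i : ℕ, (f ^ i) x = a ^ i • x := by
    intro i
    induction i with
    | zero => simp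
    | succ i ih =>
        rw [pow_succ', Module.End.mul_apply, ih, map_smul, h, smul_smul, ← pow_succ]
  induction Q using Polynomial.induction_on' with
  | add p q hp hq =>
      rw [map_add, LinearMap.add_apply, hp, hq, Polynomial.eval_add, add_smul]
  | monomial i c =>
      rw [Polynomial.aeval_monomial, Polynomial.eval_monomial, Module.End.mul_apply, hpow]
      simp [Module.algebraMap_end_apply, smul_smul, mul_comm]

lemma aeval_Bu_X_pow (Q : Polynomial K) (j : ℕ) :
    Polynomial.aeval (Bu K) Q ((Polynomial.X : Polynomial K) ^ j) =
      Q.eval (((j + 1 : ℕ) : K)) • Polynomial.X ^ j :=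
  aeval_apply_smul _ _ _ (Bu_X_pow j) Q

lemma eq_one_of_eval_nat [CharZero K] (Q : Polynomial K) (g : ℕ → ℕ)
    (hg : Function.Injective g) (h : ∀ i, Q.eval ((g i : ℕ) : K) = 1) : Q = 1 := by
  have h0 : Q - 1 = 0 := by
    apply Polynomial.eq_zero_of_infinite_isRoot
    apply Set.Infinite.mono (s := Set.range fun i : ℕ => ((g i : ℕ) : K))
    · rintro x ⟨i, rfl⟩
      simp [Polynomial.IsRoot, h i]
    · exact Set.infinite_range_of_injective
        (fun i j hij => hg (Nat.cast_injective hij))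
  have := sub_eq_zero.mp h0
  simpa using this

/-- If `ζ^{(q)} = Q(u) ζ^{(q)}` then `Q = 1`. -/
lemma Q_eq_one_of_fix [CharZero K] {q : ℤ} {Q : Polynomial K}
    (h : Bz K q = Polynomial.aeval (Bu K) Q * Bz K q) : Q = 1 := by
  have hev : ∀ j : ℕ, (zcoef q j : K) ≠ 0 → Q.eval (((zexp q j + 1 : ℕ) : K)) = 1 := by
    intro j hj
    have hkey := LinearMap.congr_fun h ((Polynomial.X : Polynomial K) ^ j)
    rw [Module.End.mul_apply, Bz_X_pow, map_smul, aeval_Bu_X_pow] at hkey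
    have hc := congrArg (fun p => Polynomial.coeff p (zexp q j)) hkey
    simp only [Polynomial.coeff_smul, Polynomial.coeff_X_pow, eq_self_iff_true, if_true,
      smul_eq_mul, mul_one] at hc
    exact mul_left_cancel₀ hj (hc.symm.trans (mul_one _).symm)
  rcases le_or_gt 0 q with hq | hq
  · refine eq_one_of_eval_nat Q (fun i => i + q.toNat + 1) (fun i j hij => by simpa using hij) ?_
    intro i
    have := hev i (by simp [zcoef, hq])
    simpa [zexp, hq] using this
  · refine eq_one_of_eval_nat Q (fun i => i + 1) (fun i j hij => by simpa using hij) ?_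
    intro i
    have hc : (zcoef q ((-q).toNat + i) : K) ≠ 0 := by
      simp only [zcoef, if_neg (not_le.mpr hq)]
      have hd : ((-q).toNat + i).descFactorial ((-q).toNat) ≠ 0 := by
        rw [Ne, Nat.descFactorial_eq_zero_iff_lt]
        omega
      exact Nat.cast_ne_zero.mpr hd
    have := hev ((-q).toNat + i) hc
    simpa [zexp, not_le.mpr hq, Nat.add_sub_cancel_left] using this

lemma P_eq_one {P : ℤ → ℤ → Polynomial K} [CharZero K]
    (hP : ∀ m n : ℤ, Bz K m * Bz K n = Polynomial.aeval (Bu K) (P m n) * Bz K (m + n))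
    {m n : ℤ} (h : m = 0 ∨ n = 0) : P m n = 1 := by
  have hz0 : Bz K 0 = 1 := by
    simp [Bz]
  rcases h with rfl | rfl
  · have := hP 0 n
    rw [hz0, one_mul, zero_add] at this
    exact Q_eq_one_of_fix this
  · have := hP m 0
    rw [hz0, mul_one, add_zero] at this
    exact Q_eq_one_of_fix this

/-! ### Multivariate actions on monomials -/

lemma Wx_pow_monomial (e : E) (a : ℕ) (d : E →₀ ℕ) (c : K) :
    (Wx K e ^ a) (monomial d c) = monomial (d + Finsupp.single e a) c := by
  rw [Wx, LinearMap.pow_mulLeft, LinearMap.mulLeft_apply, X_pow_eq_monomial, monomial_mul,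
    one_mul, add_comm]

lemma Wy_pow_monomial (e : E) (b : ℕ) (d : E →₀ ℕ) (c : K) :
    (Wy K e ^ b) (monomial d c) =
      ((d e).descFactorial b : K) • monomial (d - Finsupp.single e b) c := by
  induction b with
  | zero => simp
  | succ b ih =>
      rw [pow_succ', Module.End.mul_apply, ih, map_smul]
      have h2 : (Wy K e) (monomial (d - Finsupp.single e b) c) =
          ((d e - b : ℕ) : K) • monomial (d - Finsupp.single e (b + 1)) c := by
        show (pderiv e) (monomial (d - Finsupp.single e b) c) = _
        rw [pderiv_monomial, Finsupp.tsub_apply, Finsupp.single_eq_same, tsub_tsub,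
          ← Finsupp.single_add, smul_monomial, smul_eq_mul, mul_comm]
      rw [h2, smul_smul, Nat.descFactorial_succ]
      congr 1
      push_cast
      ring

lemma Wz_zero (e : E) : Wz K e 0 = 1 := by
  simp [Wz]

lemma Finsupp.update_add_single (d : E →₀ ℕ) (e : E) (a : ℕ) :
    d + Finsupp.single e a = Finsupp.update d e (d e + a) := by
  ext x
  rcases eq_or_ne x e with rfl | hx
  · simp [Finsupp.coe_update]
  · simp [Finsupp.coe_update, Function.update_of_ne hx, Finsupp.single_eq_of_ne' (Ne.symm hx)]

lemma Finsupp.update_sub_single (d : E →₀ ℕ) (e : E) (b : ℕ) :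
    d - Finsupp.single e b = Finsupp.update d e (d e - b) := by
  ext x
  rcases eq_or_ne x e with rfl | hx
  · simp [Finsupp.coe_update, Finsupp.tsub_apply]
  · simp [Finsupp.coe_update, Function.update_of_ne hx, Finsupp.tsub_apply,
      Finsupp.single_eq_of_ne' (Ne.symm hx)]

lemma Finsupp.update_update (d : E →₀ ℕ) (e : E) (a b : ℕ) :
    Finsupp.update (Finsupp.update d e a) e b = Finsupp.update d e b := by
  ext x
  rcases eq_or_ne x e with rfl | hx
  · simp [Finsupp.coe_update]
  · simp [Finsupp.coe_update, Function.update_of_ne hx]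

lemma Wz_monomial (e : E) (p : ℤ) (d : E →₀ ℕ) (c : K) :
    Wz K e p (monomial d c) =
      (zcoef p (d e) : K) • monomial (Finsupp.update d e (zexp p (d e))) c := by
  unfold Wz zcoef zexp
  split_ifs with h
  · rw [Wx_pow_monomial, Finsupp.update_add_single]; simp
  · rw [Wy_pow_monomial, Finsupp.update_sub_single]

lemma Wu_monomial (e : E) (d : E →₀ ℕ) (c : K) :
    Wu K e (monomial d c) = ((d e + 1 : ℕ) : K) • monomial d c := by
  rw [Wu, Module.End.mul_apply]
  have hx : (Wx K e) (monomial d c) = monomial (d + Finsupp.single e 1) c := by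
    have := Wx_pow_monomial e 1 d c
    rwa [pow_one] at this
  rw [hx]
  show (pderiv e) (monomial (d + Finsupp.single e 1) c) = _
  rw [pderiv_monomial, add_tsub_cancel_right, Finsupp.add_apply, Finsupp.single_eq_same,
    smul_monomial, smul_eq_mul, mul_comm]

lemma aeval_Wu_monomial (e : E) (Q : Polynomial K) (d : E →₀ ℕ) (c : K) :
    Polynomial.aeval (Wu K e) Q (monomial d c) =
      Q.eval ((d e + 1 : ℕ) : K) • monomial d c :=
  aeval_apply_smul _ _ _ (Wu_monomial e d c) Q

/-- Transfer of the rank-one relation to the `e`-th variable. -/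
lemma Wz_mul_Wz {P : ℤ → ℤ → Polynomial K}
    (hP : ∀ m n : ℤ, Bz K m * Bz K n = Polynomial.aeval (Bu K) (P m n) * Bz K (m + n))
    (e : E) (m n : ℤ) :
    Wz K e m * Wz K e n = Polynomial.aeval (Wu K e) (P m n) * Wz K e (m + n) := by
  refine Module.Basis.ext (MvPolynomial.basisMonomials E K) fun d => ?_
  rw [MvPolynomial.coe_basisMonomials]
  set j := d e with hj
  set a1 := zexp m (zexp n j) with ha1
  set a2 := zexp (m + n) j with ha2
  set c1 : K := (zcoef n j : K) * (zcoef m (zexp n j) : K) with hc1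
  set c2 : K := (zcoef (m + n) j : K) * (P m n).eval ((a2 + 1 : ℕ) : K) with hc2
  have hkey : c1 • (Polynomial.X : Polynomial K) ^ a1 = c2 • Polynomial.X ^ a2 := by
    have := LinearMap.congr_fun (hP m n) ((Polynomial.X : Polynomial K) ^ j)
    rw [Module.End.mul_apply, Bz_X_pow, map_smul, Bz_X_pow, Module.End.mul_apply, Bz_X_pow,
      map_smul, aeval_Bu_X_pow, smul_smul, smul_smul] at this
    rw [hc1, hc2]
    exact this
  have hL : (Wz K e m * Wz K e n) (monomial d 1) =
      c1 • monomial (Finsupp.update d e a1) (1 : K) := by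
    rw [Module.End.mul_apply, Wz_monomial, map_smul, Wz_monomial, Finsupp.coe_update,
      Function.update_self, Finsupp.update_update, smul_smul, hc1, ha1, hj]
  have hR : (Polynomial.aeval (Wu K e) (P m n) * Wz K e (m + n)) (monomial d 1) =
      c2 • monomial (Finsupp.update d e a2) (1 : K) := by
    rw [Module.End.mul_apply, Wz_monomial, map_smul, aeval_Wu_monomial, Finsupp.coe_update,
      Function.update_self, smul_smul, hc2, ha2, hj]
  rw [hL, hR]
  by_cases h12 : a1 = a2
  · have hcc : c1 = c2 := by
      have := congrArg (fun p => Polynomial.coeff p a2) hkey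
      simpa [Polynomial.coeff_smul, Polynomial.coeff_X_pow, h12] using this
    rw [h12, hcc]
  · have hne : a2 ≠ a1 := fun h => h12 h.symm
    have hc10 : c1 = 0 := by
      have := congrArg (fun p => Polynomial.coeff p a1) hkey
      simpa [Polynomial.coeff_smul, Polynomial.coeff_X_pow, h12] using this
    have hc20 : c2 = 0 := by
      have := congrArg (fun p => Polynomial.coeff p a2) hkey
      simpa [Polynomial.coeff_smul, Polynomial.coeff_X_pow, hne] using this.symm
    rw [hc10, hc20, zero_smul, zero_smul]


/-! ### Commutation lemmas -/

lemma commute_Wz_Wu {e f : E} (h : e ≠ f) (p : ℤ) : Commute (Wz K e p) (Wu K f) := by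
  have hyx : Commute (Wx K e) (Wy K f) := (commute_Wy_Wx (Ne.symm h)).symm
  have hyy : Commute (Wy K e) (Wy K f) := commute_Wy_Wy e f
  have hxx : Commute (Wx K e) (Wx K f) := commute_Wx_Wx e f
  have hyx' : Commute (Wy K e) (Wx K f) := commute_Wy_Wx h
  unfold Wz Wu
  split_ifs with hp
  · exact Commute.pow_left (hyx.mul_right hxx) _
  · exact Commute.pow_left (hyy.mul_right hyx') _

lemma commute_Wz_aevalWu {e f : E} (h : e ≠ f) (p : ℤ) (Q : Polynomial K) :
    Commute (Wz K e p) (Polynomial.aeval (Wu K f) Q) := by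
  rw [Polynomial.aeval_eq_sum_range]
  apply Commute.sum_right
  intro i _
  exact (((commute_Wz_Wu h p).pow_right i).smul_right _)

/-- The pair factor `∏_{e : k e ≠ 0, l e ≠ 0} P_{k e, l e}(u_e)`. -/
noncomputable def pairF (K : Type*) [Field K] {E : Type*} [Fintype E] [DecidableEq E]
    (P : ℤ → ℤ → Polynomial K) (k l : E → ℤ) : Module.End K (MvPolynomial E K) :=
  (Finset.univ.filter fun e : E => k e ≠ 0 ∧ l e ≠ 0).noncommProd
    (fun e => Polynomial.aeval (Wu K e) (P (k e) (l e)))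
    (fun a _ b _ _ => commute_aeval_aeval (commute_Wu a b) _ _)

lemma edgeFactor_eq_pairF {V : Type*} (γ : E → V → ℤ) (P : ℤ → ℤ → Polynomial K) (p : V × V) :
    edgeFactor K γ P p = pairF K P (fun e => γ e p.1) (fun e => γ e p.2) := rfl

/-- Multiplication rule for `z`-monomials. -/
lemma Zpow_mul {P : ℤ → ℤ → Polynomial K} [CharZero K]
    (hP : ∀ m n : ℤ, Bz K m * Bz K n = Polynomial.aeval (Bu K) (P m n) * Bz K (m + n))
    (k l : E → ℤ) :
    Zpow K k * Zpow K l = pairF K P k l * Zpow K (k + l) := by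
  classical
  have comm_zk : (↑(Finset.univ : Finset E) : Set E).Pairwise
      (Function.onFun Commute fun e => Wz K e (k e)) := fun a _ b _ hab => commute_Wz hab _ _
  have comm_zl : (↑(Finset.univ : Finset E) : Set E).Pairwise
      (Function.onFun Commute fun e => Wz K e (l e)) := fun a _ b _ hab => commute_Wz hab _ _
  have comm_lk : (↑(Finset.univ : Finset E) : Set E).Pairwise
      (fun a b => Commute (Wz K a (l a)) (Wz K b (k b))) :=
    fun a _ b _ hab => commute_Wz hab _ _
  have commA : (↑(Finset.univ : Finset E) : Set E).Pairwise
      (Function.onFun Commute fun e => Polynomial.aeval (Wu K e) (P (k e) (l e))) :=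
    fun a _ b _ _ => commute_aeval_aeval (commute_Wu a b) _ _
  have commB : (↑(Finset.univ : Finset E) : Set E).Pairwise
      (Function.onFun Commute fun e => Wz K e ((k + l) e)) := fun a _ b _ hab => commute_Wz hab _ _
  have commBA : (↑(Finset.univ : Finset E) : Set E).Pairwise
      (fun x y => Commute (Wz K x ((k + l) x))
        (Polynomial.aeval (Wu K y) (P (k y) (l y)))) :=
    fun a _ b _ hab => commute_Wz_aevalWu hab _ _
  have step1 : Zpow K k * Zpow K l =
      Finset.univ.noncommProd
        ((fun e => Wz K e (k e)) * (fun e => Wz K e (l e)))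
        (Finset.noncommProd_mul_distrib_aux comm_zk comm_zl comm_lk) := by
    rw [Finset.noncommProd_mul_distrib (fun e => Wz K e (k e)) (fun e => Wz K e (l e))
      comm_zk comm_zl comm_lk]
    rfl
  have step2 : Finset.univ.noncommProd
        ((fun e => Wz K e (k e)) * (fun e => Wz K e (l e)))
        (Finset.noncommProd_mul_distrib_aux comm_zk comm_zl comm_lk) =
      Finset.univ.noncommProd
        ((fun e => Polynomial.aeval (Wu K e) (P (k e) (l e))) *
          (fun e => Wz K e ((k + l) e)))
        (Finset.noncommProd_mul_distrib_aux commA commB commBA) := by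
    apply Finset.noncommProd_congr rfl
    intro e _
    exact Wz_mul_Wz hP e (k e) (l e)
  have step3 : Finset.univ.noncommProd
        ((fun e => Polynomial.aeval (Wu K e) (P (k e) (l e))) *
          (fun e => Wz K e ((k + l) e)))
        (Finset.noncommProd_mul_distrib_aux commA commB commBA) =
      Finset.univ.noncommProd (fun e => Polynomial.aeval (Wu K e) (P (k e) (l e))) commA *
        Zpow K (k + l) := by
    rw [Finset.noncommProd_mul_distrib (fun e => Polynomial.aeval (Wu K e) (P (k e) (l e)))
      (fun e => Wz K e ((k + l) e)) commA commB commBA]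
    rfl
  have step4 : Finset.univ.noncommProd
      (fun e => Polynomial.aeval (Wu K e) (P (k e) (l e))) commA = pairF K P k l := by
    have hsplit : (Finset.univ : Finset E) =
        (Finset.univ.filter fun e : E => k e ≠ 0 ∧ l e ≠ 0) ∪
        (Finset.univ.filter fun e : E => ¬(k e ≠ 0 ∧ l e ≠ 0)) :=
      (Finset.filter_union_filter_not_eq _ _).symm
    have hdisj : Disjoint (Finset.univ.filter fun e : E => k e ≠ 0 ∧ l e ≠ 0)
        (Finset.univ.filter fun e : E => ¬(k e ≠ 0 ∧ l e ≠ 0)) :=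
      Finset.disjoint_filter_filter_not _ _ _
    erw [Finset.noncommProd_congr hsplit (fun x _ => rfl) commA,
      Finset.noncommProd_union_of_disjoint hdisj]
    have hone : (Finset.univ.filter fun e : E => ¬(k e ≠ 0 ∧ l e ≠ 0)).noncommProd
        (fun e => Polynomial.aeval (Wu K e) (P (k e) (l e)))
        (fun a _ b _ _ => commute_aeval_aeval (commute_Wu a b) _ _) = 1 := by
      erw [Finset.noncommProd_eq_pow_card _ _ _ 1, one_pow]
      intro e he
      rw [Finset.mem_filter] at he
      have he' : k e = 0 ∨ l e = 0 := by tauto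
      rw [P_eq_one hP he']
      simp
    rw [hone, mul_one]
    rfl
  rw [step1, step2, step3, step4]

lemma commute_pairF (P : ℤ → ℤ → Polynomial K) (k l k' l' : E → ℤ) :
    Commute (pairF K P k l) (pairF K P k' l') := by
  unfold pairF
  apply Finset.noncommProd_commute
  intro x _
  apply Commute.symm
  apply Finset.noncommProd_commute
  intro z _
  exact commute_aeval_aeval (commute_Wu x z) _ _

lemma gamma_zero_of {V : Type*} {γ : E → V → ℤ} (hM : CondM γ) {e : E} {v w x : V}
    (hv : γ e v ≠ 0) (hw : γ e w ≠ 0) (hvw : v ≠ w) (hxv : x ≠ v) (hxw : x ≠ w) :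
    γ e x = 0 := by
  by_contra hx
  rcases lt_or_gt_of_ne hx with hx | hx
  · have hv' : 0 < γ e v := by
      rcases lt_or_gt_of_ne hv with h' | h'
      · exact absurd ((hM e).2 v x h' hx).symm hxv
      · exact h'
    have hw' : 0 < γ e w := by
      rcases lt_or_gt_of_ne hw with h' | h'
      · exact absurd ((hM e).2 w x h' hx).symm hxw
      · exact h'
    exact hvw ((hM e).1 v w hv' hw')
  · have hv' : γ e v < 0 := by
      rcases lt_or_gt_of_ne hv with h' | h'
      · exact h'
      · exact absurd ((hM e).1 v x h' hx).symm hxv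
    have hw' : γ e w < 0 := by
      rcases lt_or_gt_of_ne hw with h' | h'
      · exact h'
      · exact absurd ((hM e).1 w x h' hx).symm hxw
    exact hvw ((hM e).2 v w hv' hw')

lemma pairF_one (P : ℤ → ℤ → Polynomial K) {k l : E → ℤ}
    (h : ∀ e, k e = 0 ∨ l e = 0) : pairF K P k l = 1 := by
  unfold pairF
  have hempty : (Finset.univ.filter fun e : E => k e ≠ 0 ∧ l e ≠ 0) = ∅ := by
    rw [Finset.filter_eq_empty_iff]
    intro e _
    rcases h e with h' | h' <;> tauto
  exact (Finset.noncommProd_congr hempty (fun x _ => rfl) _).trans (Finset.noncommProd_empty _ _)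

lemma pairF_sum {V : Type*} [DecidableEq V] {γ : E → V → ℤ} (hM : CondM γ)
    (P : ℤ → ℤ → Polynomial K) {a : V} :
    ∀ {s : Finset V}, a ∉ s →
      pairF K P (fun e => γ e a) (fun e => ∑ v ∈ s, γ e v) =
        s.noncommProd (fun b => pairF K P (fun e => γ e a) (fun e => γ e b))
          (fun b _ c _ _ => commute_pairF P _ _ _ _) := by
  intro s
  induction s using Finset.induction_on with
  | empty =>
      intro _
      erw [Finset.noncommProd_empty]
      exact pairF_one P (fun e => Or.inr (by simp))
  | insert b s hb ih =>
      intro ha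
      have hab : a ≠ b := fun h => ha (h ▸ Finset.mem_insert_self b s)
      have has : a ∉ s := fun h => ha (Finset.mem_insert_of_mem h)
      have hfun : (fun e => ∑ v ∈ insert b s, γ e v) =
          fun e => γ e b + ∑ v ∈ s, γ e v := funext fun e => Finset.sum_insert hb
      erw [Finset.noncommProd_insert_of_notMem _ _ _ _ hb, ← ih has, hfun]
      -- now split the filter set
      have fact1 : ∀ e : E, γ e a ≠ 0 → γ e b ≠ 0 → ∑ v ∈ s, γ e v = 0 := by
        intro e hea heb
        apply Finset.sum_eq_zero
        intro v hv
        exact gamma_zero_of hM hea heb hab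
          (fun h => has (h ▸ hv)) (fun h => hb (h ▸ hv))
      have fact2 : ∀ e : E, γ e a ≠ 0 → (∑ v ∈ s, γ e v) ≠ 0 → γ e b = 0 := by
        intro e hea hsum
        by_contra heb
        exact hsum (fact1 e hea heb)
      have hA : (Finset.univ.filter fun e : E =>
            γ e a ≠ 0 ∧ (γ e b + ∑ v ∈ s, γ e v) ≠ 0) =
          (Finset.univ.filter fun e : E => γ e a ≠ 0 ∧ γ e b ≠ 0) ∪
            (Finset.univ.filter fun e : E => γ e a ≠ 0 ∧ (∑ v ∈ s, γ e v) ≠ 0) := by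
        ext e
        simp only [Finset.mem_filter, Finset.mem_union, Finset.mem_univ, true_and]
        constructor
        · rintro ⟨hea, hsum⟩
          by_cases heb : γ e b = 0
          · exact Or.inr ⟨hea, by rwa [heb, zero_add] at hsum⟩
          · exact Or.inl ⟨hea, heb⟩
        · rintro (⟨hea, heb⟩ | ⟨hea, hsum⟩)
          · exact ⟨hea, by rw [fact1 e hea heb, add_zero]; exact heb⟩
          · exact ⟨hea, by rw [fact2 e hea hsum, zero_add]; exact hsum⟩
      have hdisj : Disjoint
          (Finset.univ.filter fun e : E => γ e a ≠ 0 ∧ γ e b ≠ 0)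
          (Finset.univ.filter fun e : E => γ e a ≠ 0 ∧ (∑ v ∈ s, γ e v) ≠ 0) := by
        rw [Finset.disjoint_left]
        intro e he1 he2
        rw [Finset.mem_filter] at he1 he2
        exact he2.2.2 (fact1 e he1.2.1 he1.2.2)
      show (Finset.univ.filter fun e : E =>
            γ e a ≠ 0 ∧ (γ e b + ∑ v ∈ s, γ e v) ≠ 0).noncommProd
          (fun e => Polynomial.aeval (Wu K e) (P (γ e a) (γ e b + ∑ v ∈ s, γ e v)))
          (fun a _ b _ _ => commute_aeval_aeval (commute_Wu a b) _ _) = _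
      erw [Finset.noncommProd_congr hA (fun x _ => rfl)
          (fun a _ b _ _ => commute_aeval_aeval (commute_Wu a b) _ _),
        Finset.noncommProd_union_of_disjoint hdisj]
      congr 1
      · apply Finset.noncommProd_congr rfl
        intro e he
        rw [Finset.mem_filter] at he
        rw [fact1 e he.2.1 he.2.2, add_zero]
      · apply Finset.noncommProd_congr rfl
        intro e he
        rw [Finset.mem_filter] at he
        rw [fact2 e he.2.1 he.2.2, zero_add]

lemma noncommProd_map_emb {α β M : Type*} [Monoid M] (s : Finset α) (emb : α ↪ β)
    (f : β → M) (h : ∀ x y, Commute (f x) (f y)) :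
    (s.map emb).noncommProd f (fun a _ b _ _ => h a b) =
      s.noncommProd (fun a => f (emb a)) (fun a _ b _ _ => h _ _) := by
  simp only [Finset.noncommProd, Finset.map_val, Multiset.map_map]
  rfl

/-- Listing the elements of a finite set `V'` of vertices in increasing order
`v_1 < ⋯ < v_r`, the product `z^{γ_{v_1}} ⋯ z^{γ_{v_r}}` equals
`(∏_{v<w in V'} ∏_{e : γ e v ≠ 0, γ e w ≠ 0} P_{γ e v, γ e w}(u_e)) · z^k`,
where `k e = Σ_{v ∈ V'} γ e v` and `P_{m,n}` are the structure polynomials of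
the rank-one Weyl algebra. -/
theorem varphi_on_sorted_product {K V E : Type*} [Field K] [CharZero K]
    [Fintype E] [DecidableEq E] [Fintype V] [LinearOrder V]
    (γ : E → V → ℤ) (hM : CondM γ)
    (P : ℤ → ℤ → Polynomial K)
    (hP : ∀ m n : ℤ, Bz K m * Bz K n = Polynomial.aeval (Bu K) (P m n) * Bz K (m + n))
    (V' : Finset V) :
    ((V'.sort (· ≤ ·)).map fun v => Zpow K fun e => γ e v).prod =
      ((V' ×ˢ V').filter fun p : V × V => p.1 < p.2).noncommProd
          (edgeFactor K γ P) (fun p _ q _ _ => commute_edgeFactor K γ P p q)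
        * Zpow K (fun e => ∑ v ∈ V', γ e v) := by
  classical
  induction V' using Finset.induction_on_min with
  | empty =>
      have hz : Zpow K (fun e : E => ∑ v ∈ (∅ : Finset V), γ e v) = 1 := by
        erw [Zpow, Finset.noncommProd_eq_pow_card _ _ _ 1, one_pow]
        intro e _
        simp only [Finset.sum_empty]
        exact Wz_zero e
      rw [hz]
      simp
  | insert a s hlt ih =>
      have ha : a ∉ s := fun h => lt_irrefl a (hlt a h)
      have hle : ∀ b ∈ s, a ≤ b := fun b hb => (hlt b hb).le
      rw [Finset.sort_insert _ hle ha, List.map_cons, List.prod_cons, ih]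
      have hcommZaEF : ∀ p ∈ (s ×ˢ s).filter (fun p : V × V => p.1 < p.2),
          Commute (Zpow K fun e => γ e a) (edgeFactor K γ P p) := by
        intro p hp
        rw [Finset.mem_filter, Finset.mem_product] at hp
        obtain ⟨⟨hp1, hp2⟩, hp3⟩ := hp
        rw [Zpow]
        refine (Finset.noncommProd_commute _ _ _ _ ?_).symm
        intro e _
        rw [edgeFactor]
        refine (Finset.noncommProd_commute _ _ _ _ ?_).symm
        intro f hf
        rw [Finset.mem_filter] at hf
        by_cases hef : f = e
        · subst hef
          have h0 : γ f a = 0 := gamma_zero_of hM hf.2.1 hf.2.2 (ne_of_lt hp3)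
            (ne_of_lt (hlt _ hp1)) (ne_of_lt (hlt _ hp2))
          rw [h0, Wz_zero]
          exact Commute.one_left _
        · exact commute_Wz_aevalWu (fun h => hef h.symm) _ _
      have hcomm1 : Commute (Zpow K fun e => γ e a)
          (((s ×ˢ s).filter fun p : V × V => p.1 < p.2).noncommProd
            (edgeFactor K γ P) (fun p _ q _ _ => commute_edgeFactor K γ P p q)) :=
        Finset.noncommProd_commute _ _ _ _ hcommZaEF
      have hpairs : (((insert a s) ×ˢ (insert a s)).filter fun p : V × V => p.1 < p.2) =
          s.map (Function.Embedding.sectR a V) ∪ (s ×ˢ s).filter (fun p : V × V => p.1 < p.2) := by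
        ext p
        obtain ⟨x, y⟩ := p
        simp only [Finset.mem_filter, Finset.mem_product, Finset.mem_insert, Finset.mem_union,
          Finset.mem_map, Function.Embedding.sectR_apply, Prod.mk.injEq]
        constructor
        · rintro ⟨⟨hx, hy⟩, hxy⟩
          rcases hx with rfl | hx
          · rcases hy with rfl | hy
            · exact absurd hxy (lt_irrefl _)
            · exact Or.inl ⟨y, hy, rfl, rfl⟩
          · rcases hy with rfl | hy
            · exact absurd (hlt x hx) (not_lt.mpr hxy.le)
            · exact Or.inr ⟨⟨hx, hy⟩, hxy⟩
        · rintro (⟨b, hb, rfl, rfl⟩ | ⟨⟨hx, hy⟩, hxy⟩)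
          · exact ⟨⟨Or.inl rfl, Or.inr hb⟩, hlt b hb⟩
          · exact ⟨⟨Or.inr hx, Or.inr hy⟩, hxy⟩
      have hdisj : Disjoint (s.map (Function.Embedding.sectR a V))
          ((s ×ˢ s).filter fun p : V × V => p.1 < p.2) := by
        rw [Finset.disjoint_left]
        rintro ⟨x, y⟩ hmem hmem2
        rw [Finset.mem_map] at hmem
        obtain ⟨b, hb, heq⟩ := hmem
        rw [Finset.mem_filter, Finset.mem_product] at hmem2
        rw [Function.Embedding.sectR_apply] at heq
        injection heq with h1 h2
        subst h1
        exact ha hmem2.1.1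
      have hPins : (((insert a s) ×ˢ (insert a s)).filter
            fun p : V × V => p.1 < p.2).noncommProd
            (edgeFactor K γ P) (fun p _ q _ _ => commute_edgeFactor K γ P p q) =
          (s.noncommProd (fun b => edgeFactor K γ P (a, b))
            (fun b _ c _ _ => commute_edgeFactor K γ P (a, b) (a, c))) *
          ((s ×ˢ s).filter fun p : V × V => p.1 < p.2).noncommProd
            (edgeFactor K γ P) (fun p _ q _ _ => commute_edgeFactor K γ P p q) := by
        erw [Finset.noncommProd_congr hpairs (fun x _ => rfl)
            (fun p _ q _ _ => commute_edgeFactor K γ P p q),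
          Finset.noncommProd_union_of_disjoint hdisj,
          noncommProd_map_emb s (Function.Embedding.sectR a V) (edgeFactor K γ P) (commute_edgeFactor K γ P)]
        rfl
      have hsum : pairF K P (fun e => γ e a) (fun e => ∑ v ∈ s, γ e v) =
          s.noncommProd (fun b => edgeFactor K γ P (a, b))
            (fun b _ c _ _ => commute_edgeFactor K γ P (a, b) (a, c)) :=
        pairF_sum hM P ha
      have hcomm2 : Commute
          (s.noncommProd (fun b => edgeFactor K γ P (a, b))
            (fun b _ c _ _ => commute_edgeFactor K γ P (a, b) (a, c)))
          (((s ×ˢ s).filter fun p : V × V => p.1 < p.2).noncommProd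
            (edgeFactor K γ P) (fun p _ q _ _ => commute_edgeFactor K γ P p q)) := by
        refine Finset.noncommProd_commute _ _ _ _ (fun p _ => ?_)
        exact (Finset.noncommProd_commute _ _ _ _
          (fun b _ => commute_edgeFactor K γ P p (a, b))).symm
      have hfinal : (fun e => γ e a) + (fun e => ∑ v ∈ s, γ e v) =
          fun e => ∑ v ∈ insert a s, γ e v := by
        funext e
        rw [Pi.add_apply, Finset.sum_insert ha]
      calc (Zpow K fun e => γ e a) *
            (((s ×ˢ s).filter fun p : V × V => p.1 < p.2).noncommProd
              (edgeFactor K γ P) (fun p _ q _ _ => commute_edgeFactor K γ P p q) *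
              Zpow K (fun e => ∑ v ∈ s, γ e v))
          = ((Zpow K fun e => γ e a) *
              ((s ×ˢ s).filter fun p : V × V => p.1 < p.2).noncommProd
                (edgeFactor K γ P) (fun p _ q _ _ => commute_edgeFactor K γ P p q)) *
              Zpow K (fun e => ∑ v ∈ s, γ e v) := (mul_assoc _ _ _).symm
        _ = (((s ×ˢ s).filter fun p : V × V => p.1 < p.2).noncommProd
                (edgeFactor K γ P) (fun p _ q _ _ => commute_edgeFactor K γ P p q) *
              (Zpow K fun e => γ e a)) *
              Zpow K (fun e => ∑ v ∈ s, γ e v) := by rw [hcomm1.eq]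
        _ = ((s ×ˢ s).filter fun p : V × V => p.1 < p.2).noncommProd
                (edgeFactor K γ P) (fun p _ q _ _ => commute_edgeFactor K γ P p q) *
              ((Zpow K fun e => γ e a) * Zpow K (fun e => ∑ v ∈ s, γ e v)) :=
            mul_assoc _ _ _
        _ = ((s ×ˢ s).filter fun p : V × V => p.1 < p.2).noncommProd
                (edgeFactor K γ P) (fun p _ q _ _ => commute_edgeFactor K γ P p q) *
              (pairF K P (fun e => γ e a) (fun e => ∑ v ∈ s, γ e v) *
                Zpow K (fun e => ∑ v ∈ insert a s, γ e v)) := by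
            rw [Zpow_mul hP, hfinal]
        _ = ((s ×ˢ s).filter fun p : V × V => p.1 < p.2).noncommProd
                (edgeFactor K γ P) (fun p _ q _ _ => commute_edgeFactor K γ P p q) *
              (s.noncommProd (fun b => edgeFactor K γ P (a, b))
                (fun b _ c _ _ => commute_edgeFactor K γ P (a, b) (a, c)) *
                Zpow K (fun e => ∑ v ∈ insert a s, γ e v)) := by rw [hsum]
        _ = (((s ×ˢ s).filter fun p : V × V => p.1 < p.2).noncommProd
                (edgeFactor K γ P) (fun p _ q _ _ => commute_edgeFactor K γ P p q) *
              s.noncommProd (fun b => edgeFactor K γ P (a, b))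
                (fun b _ c _ _ => commute_edgeFactor K γ P (a, b) (a, c))) *
                Zpow K (fun e => ∑ v ∈ insert a s, γ e v) := (mul_assoc _ _ _).symm
        _ = (s.noncommProd (fun b => edgeFactor K γ P (a, b))
                (fun b _ c _ _ => commute_edgeFactor K γ P (a, b) (a, c)) *
              ((s ×ˢ s).filter fun p : V × V => p.1 < p.2).noncommProd
                (edgeFactor K γ P) (fun p _ q _ _ => commute_edgeFactor K γ P p q)) *
                Zpow K (fun e => ∑ v ∈ insert a s, γ e v) := by rw [hcomm2.eq]
        _ = (((insert a s) ×ˢ (insert a s)).filter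
                fun p : V × V => p.1 < p.2).noncommProd
                (edgeFactor K γ P) (fun p _ q _ _ => commute_edgeFactor K γ P p q) *
              Zpow K (fun e => ∑ v ∈ insert a s, γ e v) := by rw [hPins]
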